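/- arXiv:1903.01437 — 2 statements merged into one kernel-verified Lean document; each statement's English description precedes it below -/
import Mathlib

section
/- Generalized Jacobi identity with m=0 for the constructed brackets: let π: V⁻ → H and β: H → V⁻ be graded linear maps with β of degree +1, H a graded commutative algebra, B := π∘β satisfying B∘π = 0, β∘B = 0, and B a derivation-failure of second order such that B(a₁⋯aₙ) + Σ_i ±a₁⋯B(a_i)⋯aₙ = Σ_{i<j} ±B(a_i a_j)a₁⋯â_i⋯â_j⋯aₙ (the n-ary second order identity with B² = 0). Then Σ_{i<j} (-1)^{ε_{ij}} β( B(π x_i · π x_j) · π x₁ ⋯ \widehat{πx_i} ⋯ \widehat{πx_j} ⋯ π xₙ ) = 0, where ε_{ij} = |x_i|(|x₁|+⋯+|x_{i-1}|) + |x_j|(|x₁|+⋯+|x_{j-1}|) - |x_i||x_j|. -/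
/-- Sign operator: `eps n x = (-1)^n • x`. -/
noncomputable def eps {V : Type*} [AddCommGroup V] (n : ℤ) (x : V) : V :=
  ((-1 : ℤ) ^ n.natAbs) • x

/-- Ordered product of a list of elements, with unit `one`. -/
def lprod {V : Type*} (m : V → V → V) (one : V) (l : List V) : V :=
  l.foldr m one

private lemma lprod_zero {V : Type*} [Zero V] (m : V → V → V)
    (hl : ∀ a, m 0 a = 0) (hr : ∀ a, m a 0 = 0) (one : V) :
    ∀ l : List V, (0 : V) ∈ l → lprod m one l = 0 := by
  intro l hl0
  induction l with
  | nil => simp at hl0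
  | cons a t ih =>
    rcases List.mem_cons.mp hl0 with h | h
    · simp [lprod, ← h, hl]
    · simp only [lprod, List.foldr_cons] at ih ⊢
      rw [ih h, hr]

/-- The key computation in the proof of the main theorem (generalized Jacobi with
`m = 0`): if `H` is a graded commutative algebra, `π : V⁻ → H` and `β : H → V⁻`
(of degree `+1`) satisfy `B ∘ π = 0` and `β ∘ B = 0` with `B := π ∘ β` a second
order operator, then
`Σ_{i<j} (-1)^{ε_{ij}} β( B(π x_i · π x_j) · π x₁ ⋯ π̂x_i ⋯ π̂x_j ⋯ π xₙ ) = 0`. -/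
theorem gravity_jacobi_m_zero {k Vneg H : Type*} [Field k] [CharZero k]
    [AddCommGroup Vneg] [AddCommGroup H] [Module k Vneg] [Module k H]
    (homC : ℤ → Vneg → Prop) (homH : ℤ → H → Prop)
    (π : Vneg → H) (β : H → Vneg)
    (hπ_add : ∀ x y, π (x + y) = π x + π y)
    (hβ_add : ∀ x y, β (x + y) = β x + β y)
    (hπ_homog : ∀ p x, homC p x → homH p (π x))
    (hβ_homog : ∀ p y, homH p y → homC (p + 1) (β y))
    (m : H → H → H) (one : H)
    (hml : ∀ a b c, m (a + b) c = m a c + m b c)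
    (hmr : ∀ a b c, m a (b + c) = m a b + m a c)
    (hassoc : ∀ a b c, m (m a b) c = m a (m b c))
    (hone_l : ∀ a, m one a = a) (hone_r : ∀ a, m a one = a)
    (hm_homog : ∀ p q a b, homH p a → homH q b → homH (p + q) (m a b))
    (hcomm : ∀ p q a b, homH p a → homH q b → m a b = eps (p * q) (m b a))
    -- B ∘ π = 0 and β ∘ B = 0, where B := π ∘ β
    (hBπ : ∀ x : Vneg, π (β (π x)) = 0)
    (hβB : ∀ a : H, β (π (β a)) = 0)
    -- the n-ary second order identity for B = π ∘ β
    (h2nd : ∀ (n : ℕ), 2 ≤ n → ∀ (a : Fin n → H) (d : Fin n → ℤ),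
      (∀ i, homH (d i) (a i)) →
      (∑ i : Fin n, ∑ j : Fin n, if i < j then
          eps ((∑ t : Fin n, if t < i then d t else 0) * d i
              + (∑ t : Fin n, if t < j then d t else 0) * d j - d i * d j)
            (m (π (β (m (a i) (a j))))
              (lprod m one
                (((List.finRange n).filter (fun t => decide (t ≠ i ∧ t ≠ j))).map a)))
        else 0)
      = π (β (lprod m one (List.ofFn a)))
        + ∑ i : Fin n,
            eps (∑ t : Fin n, if t < i then d t else 0)
              (lprod m one (List.ofFn (fun t => if t = i then π (β (a t)) else a t)))) :
    ∀ (n : ℕ), 2 ≤ n → ∀ (x : Fin n → Vneg) (d : Fin n → ℤ),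
      (∀ i, homC (d i) (x i)) →
      (∑ i : Fin n, ∑ j : Fin n, if i < j then
          eps ((∑ t : Fin n, if t < i then d t else 0) * d i
              + (∑ t : Fin n, if t < j then d t else 0) * d j - d i * d j)
            (β (m (π (β (m (π (x i)) (π (x j)))))
              (lprod m one
                (((List.finRange n).filter (fun t => decide (t ≠ i ∧ t ≠ j))).map
                  (fun t => π (x t))))))
        else 0)
      = 0 := by
  intro n hn x d hx
  have hm0l : ∀ a, m 0 a = 0 := by
    intro a
    have h := hml 0 0 a
    rw [add_zero] at h
    exact (add_left_cancel (show m 0 a + 0 = m 0 a + m 0 a by rw [add_zero, ← h])).symm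
  have hm0r : ∀ a, m a 0 = 0 := by
    intro a
    have h := hmr a 0 0
    rw [add_zero] at h
    exact (add_left_cancel (show m a 0 + 0 = m a 0 + m a 0 by rw [add_zero, ← h])).symm
  let B' : H →+ Vneg := AddMonoidHom.mk' β hβ_add
  have hBeps : ∀ (e : ℤ) (y : H), B' (eps e y) = eps e (β y) := by
    intro e y
    simp only [eps]
    exact map_zsmul B' _ _
  have hB'βB : ∀ a : H, B' (π (β a)) = 0 := fun a => hβB a
  have hz : ∀ i : Fin n,
      lprod m one (List.ofFn (fun t => if t = i then π (β (π (x t))) else π (x t))) = 0 := by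
    intro i
    apply lprod_zero m hm0l hm0r
    apply List.mem_ofFn.mpr
    exact ⟨i, by simp [hBπ]⟩
  have key := congrArg B' (h2nd n hn (fun t => π (x t)) d (fun i => hπ_homog _ _ (hx i)))
  simp only [map_add, map_sum, apply_ite B', map_zero, hBeps, hB'βB, hz, eps, smul_zero,
    zero_add, Finset.sum_const_zero, add_zero] at key
  simp [eps] at key ⊢
  exact key
end

section
/- In a differential calculus with duality with volume form η (so PD(f) = ι_f(η) is an isomorphism, Bη = 0), for all homogeneous f, g ∈ H^•: ι_{\{f,g\}}(η) = (-1)^{|f|+1}( B ι_{f∪g}(η) - ι_{Δf ∪ g}(η) - (-1)^{|f|} ι_{f ∪ Δg}(η) ), where Δ := PD⁻¹ ∘ B ∘ PD. Equivalently, the Gerstenhaber bracket is generated by Δ under Poincaré duality. -/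
/-- A differential calculus with duality (Tamarkin-Tsygan, Lambre): a Gerstenhaber
algebra `(H^•, ∪, {-,-})`, a graded module `H_•` via the cap product with
contraction `ι_f = f ∩ -`, an operator `B` with `B² = 0` satisfying the Cartan
compatibilities, and a volume form `η ∈ H_n` with `η ∩ 1 = η`, `Bη = 0`, such that
`PD(f) := f ∩ η` is an isomorphism `H^i ≅ H_{n-i}` (with inverse `PDinv`). -/
structure DCD (Hc Hh : Type*) [AddCommGroup Hc] [AddCommGroup Hh] where
  homc : ℤ → Hc → Prop
  homh : ℤ → Hh → Prop
  cup : Hc → Hc → Hc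
  one : Hc
  gb : Hc → Hc → Hc
  cap : Hc → Hh → Hh
  B : Hh → Hh
  n : ℤ
  vol : Hh
  cup_addl : ∀ a b c, cup (a + b) c = cup a c + cup b c
  cup_addr : ∀ a b c, cup a (b + c) = cup a b + cup a c
  cup_assoc : ∀ a b c, cup (cup a b) c = cup a (cup b c)
  cup_one : ∀ a, cup one a = a
  one_cup : ∀ a, cup a one = a
  one_homog : homc 0 one
  cup_homog : ∀ p q a b, homc p a → homc q b → homc (p + q) (cup a b)
  cup_comm : ∀ p q a b, homc p a → homc q b → cup a b = eps (p * q) (cup b a)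
  gb_homog : ∀ p q a b, homc p a → homc q b → homc (p + q - 1) (gb a b)
  gb_skew : ∀ p q a b, homc p a → homc q b →
    gb a b = - eps ((p + 1) * (q + 1)) (gb b a)
  gb_leibniz : ∀ p q r a b c, homc p a → homc q b → homc r c →
    gb a (cup b c) = cup (gb a b) c + eps ((p + 1) * q) (cup b (gb a c))
  cap_addl : ∀ a b α, cap (a + b) α = cap a α + cap b α
  cap_addr : ∀ a α β, cap a (α + β) = cap a α + cap a β
  cap_cup : ∀ a b α, cap (cup a b) α = cap a (cap b α)
  cap_one : ∀ α, cap one α = α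
  cap_homog : ∀ p q a α, homc p a → homh q α → homh (q - p) (cap a α)
  B_add : ∀ α β, B (α + β) = B α + B β
  B_homog : ∀ q α, homh q α → homh (q + 1) (B α)
  B_sq : ∀ α, B (B α) = 0
  lie_lie : ∀ p q a b α, homc p a → homc q b →
    (B (cap a (B (cap b α) - eps q (cap b (B α))))
        - eps p (cap a (B (B (cap b α) - eps q (cap b (B α))))))
      - eps ((p + 1) * (q + 1))
        (B (cap b (B (cap a α) - eps p (cap a (B α))))
          - eps q (cap b (B (B (cap a α) - eps p (cap a (B α))))))
    = B (cap (gb a b) α) - eps (p + q - 1) (cap (gb a b) (B α))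
  compat : ∀ p q a b α, homc p a → homc q b →
    eps (p + 1) (cap (gb a b) α)
      = (B (cap a (cap b α)) - eps p (cap a (B (cap b α))))
        - eps (q * (p + 1)) (cap b (B (cap a α) - eps p (cap a (B α))))
  vol_homog : homh n vol
  vol_cap_one : cap one vol = vol
  B_vol : B vol = 0
  PDinv : Hh → Hc
  pd_left : ∀ f, PDinv (cap f vol) = f
  pd_right : ∀ α, cap (PDinv α) vol = α
  PDinv_homog : ∀ q α, homh q α → homc (n - q) (PDinv α)

/-- The BV operator `Δ = PD⁻¹ ∘ B ∘ PD` of a differential calculus with duality. -/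
noncomputable def DCD.Δ {Hc Hh : Type*} [AddCommGroup Hc] [AddCommGroup Hh]
    (D : DCD Hc Hh) (f : Hc) : Hc :=
  D.PDinv (D.B (D.cap f D.vol))


lemma eps_eps {V : Type*} [AddCommGroup V] (m : ℤ) (x : V) :
    eps m (eps m x) = x := by
  unfold eps
  rw [smul_smul, ← pow_add, Even.neg_one_pow ⟨m.natAbs, rfl⟩, one_smul]

lemma eps_congr {V : Type*} [AddCommGroup V] {m m' : ℤ} (h : Even m ↔ Even m')
    (x : V) : eps m x = eps m' x := by
  unfold eps
  have h2 : Even m.natAbs ↔ Even m'.natAbs := by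
    rw [Int.natAbs_even, Int.natAbs_even]; exact h
  rcases Nat.even_or_odd m.natAbs with he | ho
  · rw [he.neg_one_pow, (h2.mp he).neg_one_pow]
  · rw [ho.neg_one_pow, Odd.neg_one_pow
      (by rwa [← Nat.not_even_iff_odd, ← h2, Nat.not_even_iff_odd])]

lemma eps_comm {V W : Type*} [AddCommGroup V] [AddCommGroup W] (h : V → W)
    (hadd : ∀ x y, h (x + y) = h x + h y) (m : ℤ) (x : V) :
    h (eps m x) = eps m (h x) := by
  unfold eps
  exact (AddMonoidHom.mk' h hadd).map_zsmul _ x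

lemma eps_sub {V : Type*} [AddCommGroup V] (m : ℤ) (x y : V) :
    eps m (x - y) = eps m x - eps m y := smul_sub _ _ _

lemma map_zero_of_add {V W : Type*} [AddCommGroup V] [AddCommGroup W] (h : V → W)
    (hadd : ∀ x y, h (x + y) = h x + h y) : h 0 = 0 :=
  (AddMonoidHom.mk' h hadd).map_zero

/-- In a differential calculus with duality with volume form `η`, for all
homogeneous `f, g ∈ H^•`,
`ι_{{f,g}}(η) = (-1)^{|f|+1}( B ι_{f∪g}(η) - ι_{Δf ∪ g}(η) - (-1)^{|f|} ι_{f ∪ Δg}(η) )`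
where `Δ = PD⁻¹ ∘ B ∘ PD`; i.e. the Gerstenhaber bracket is generated by `Δ` under
Poincaré duality. -/
theorem gerstenhaber_generated_by_Delta {k Hc Hh : Type*} [Field k] [CharZero k]
    [AddCommGroup Hc] [AddCommGroup Hh] [Module k Hc] [Module k Hh]
    (D : DCD Hc Hh) :
    ∀ p q f g, D.homc p f → D.homc q g →
      D.cap (D.gb f g) D.vol
        = eps (p + 1)
            (D.B (D.cap (D.cup f g) D.vol)
              - D.cap (D.cup (D.Δ f) g) D.vol
              - eps p (D.cap (D.cup f (D.Δ g)) D.vol)) := by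
  intro p q f g hf hg
  -- degree of Δ f is p - 1
  have hΔf : D.homc (p - 1) (D.Δ f) := by
    have h1 := D.cap_homog p D.n f D.vol hf D.vol_homog
    have h2 := D.B_homog _ _ h1
    have h3 := D.PDinv_homog _ _ h2
    have he : D.n - (D.n - p + 1) = p - 1 := by ring
    rw [he] at h3
    exact h3
  -- compat with α = vol, using B vol = 0
  have hcap0 : ∀ a, D.cap a (0 : Hh) = 0 := fun a =>
    map_zero_of_add (D.cap a) (D.cap_addr a)
  have hc := D.compat p q f g D.vol hf hg
  rw [D.B_vol, hcap0, show eps p (0 : Hh) = 0 from smul_zero _, sub_zero] at hc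
  -- apply eps (p+1) to both sides
  have hc2 := congrArg (eps (p + 1)) hc
  rw [eps_eps] at hc2
  rw [hc2]
  congr 1
  -- rewrite the three cap expressions
  rw [D.cap_cup f g]
  rw [D.cap_cup f (D.Δ g), show D.cap (D.Δ g) D.vol = D.B (D.cap g D.vol) from
    D.pd_right _]
  have hΔfg : D.cap (D.cup (D.Δ f) g) D.vol
      = eps (q * (p + 1)) (D.cap g (D.B (D.cap f D.vol))) := by
    rw [D.cup_comm (p - 1) q (D.Δ f) g hΔf hg,
      eps_comm (fun a => D.cap a D.vol) (fun x y => D.cap_addl x y D.vol),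
      D.cap_cup, show D.cap (D.Δ f) D.vol = D.B (D.cap f D.vol) from D.pd_right _]
    apply eps_congr
    simp only [Int.even_mul, Int.even_sub, Int.even_add]
    tauto
  rw [hΔfg, sub_right_comm]
end
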